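/- Let F be a countably union-closed family of sets whose poset under inclusion satisfies the descending chain condition. Then for every a ∈ U_F there exists an optimal element b ∈ U_F with F_a ⊆ F_b. -/
import Mathlib


/-- If `F` is countably union-closed and `(F, ⊆)` satisfies DCC, then for every
`a ∈ U_F` there exists an optimal `b ∈ U_F` with `F_a ⊆ F_b`. -/
theorem stmt_3 {α : Type*} (F : Set (Set α))
    (hCUC : ∀ f : ℕ → Set α, (∀ n, f n ∈ F) → (⋃ n, f n) ∈ F)
    (hDCC : ∀ S ⊆ F, S.Nonempty → ∃ M ∈ S, ∀ B ∈ S, B ⊆ M → B = M) :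
    ∀ a ∈ ⋃₀ F, ∃ b ∈ ⋃₀ F,
      {A ∈ F | a ∈ A} ⊆ {A ∈ F | b ∈ A} ∧
      (∀ y ∈ ⋃₀ F, {A ∈ F | b ∈ A} ⊆ {A ∈ F | y ∈ A} →
        {A ∈ F | y ∈ A} = {A ∈ F | b ∈ A}) := by
  intro a ha
  by_contra h
  push_neg at h
  set Fx : α → Set (Set α) := fun x => {A ∈ F | x ∈ A} with hFx
  have step : ∀ x : α, x ∈ ⋃₀ F → Fx a ⊆ Fx x →
      ∃ y, y ∈ ⋃₀ F ∧ Fx x ⊆ Fx y ∧ Fx y ≠ Fx x := by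
    intro x hx hax
    obtain ⟨y, hy, h1, h2⟩ := h x hx hax
    exact ⟨y, hy, h1, h2⟩
  choose g hg1 hg2 hg3 using step
  let T := {x : α // x ∈ ⋃₀ F ∧ Fx a ⊆ Fx x}
  let next : T → T := fun t => ⟨g t.1 t.2.1 t.2.2,
    hg1 _ _ _, t.2.2.trans (hg2 _ _ _)⟩
  let x : ℕ → T := fun n => next^[n] ⟨a, ha, subset_rfl⟩
  have hsucc : ∀ n, x (n + 1) = next (x n) := fun n =>
    Function.iterate_succ_apply' next n _
  have hstep : ∀ n, Fx (x n).1 ⊆ Fx (x (n + 1)).1 ∧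
      Fx (x (n + 1)).1 ≠ Fx (x n).1 := by
    intro n
    rw [hsucc n]
    exact ⟨hg2 _ _ _, hg3 _ _ _⟩
  have hmono : ∀ n m, n ≤ m → Fx (x n).1 ⊆ Fx (x m).1 := by
    intro n m hnm
    induction m, hnm using Nat.le_induction with
    | base => exact subset_rfl
    | succ m hm ih => exact ih.trans (hstep m).1
  have hA : ∀ n, ∃ A, A ∈ F ∧ (x (n + 1)).1 ∈ A ∧ (x n).1 ∉ A := by
    intro n
    obtain ⟨hsub, hne⟩ := hstep n
    have hns : ¬ Fx (x (n + 1)).1 ⊆ Fx (x n).1 := fun hc =>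
      hne (le_antisymm hc hsub)
    rw [Set.not_subset] at hns
    obtain ⟨A, hA1, hA2⟩ := hns
    exact ⟨A, hA1.1, hA1.2, fun hc => hA2 ⟨hA1.1, hc⟩⟩
  choose A hAF hAin hAout using hA
  have hnotin : ∀ n k, n ≤ k → (x n).1 ∉ A k := by
    intro n k hnk hc
    exact hAout k (hmono n k hnk ⟨hAF k, hc⟩).2
  set G : ℕ → Set α := fun n => ⋃ k, A (n + k) with hG
  have hGF : ∀ n, G n ∈ F := fun n => hCUC _ (fun k => hAF _)
  have hGmono : ∀ n, G (n + 1) ⊆ G n := by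
    intro n y hy
    simp only [hG, Set.mem_iUnion] at hy ⊢
    obtain ⟨k, hk⟩ := hy
    exact ⟨k + 1, by rwa [show n + (k + 1) = n + 1 + k by ring]⟩
  have hGne : ∀ n, G (n + 1) ≠ G n := by
    intro n hc
    have h1 : (x (n + 1)).1 ∈ G n :=
      Set.mem_iUnion.2 ⟨0, by simpa using hAin n⟩
    rw [← hc] at h1
    obtain ⟨k, hk⟩ := Set.mem_iUnion.1 h1
    exact hnotin (n + 1) (n + 1 + k) (Nat.le_add_right _ _) hk
  obtain ⟨M, hM, hmin⟩ := hDCC (Set.range G)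
    (by rintro _ ⟨n, rfl⟩; exact hGF n) ⟨G 0, ⟨0, rfl⟩⟩
  obtain ⟨n, rfl⟩ := hM
  exact hGne n (hmin (G (n + 1)) ⟨n + 1, rfl⟩ (hGmono n))
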